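/- Consider a sequence G(0), G(1), ..., G(k−1) of B-connected undirected graphs on n nodes with self-loops at every node, such that for each node i there exists d_i with d_i(t) ∈ {1, d_i} for all t. If k ≥ B + 4n^3 B ln(2n/ε), then the equal-neighbor iteration x(t+1) = A(t)x(t) achieves ε-consensus: S(x(k)) ≤ ε S(x(0)) for every initial vector x(0), where S(x) = max_i x_i − min_i x_i. -/

import Mathlib

open Finset

namespace Consensus17

variable {n : ℕ}


lemma avg_le {s : Finset (Fin (n+1))} (hs : s.Nonempty) {f : Fin (n+1) → ℝ} {M : ℝ}
    (h : ∀ j ∈ s, f j ≤ M) : (∑ j ∈ s, f j) / (s.card : ℝ) ≤ M := by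
  have hc : (0:ℝ) < s.card := by exact_mod_cast card_pos.mpr hs
  rw [div_le_iff₀ hc]
  calc ∑ j ∈ s, f j ≤ ∑ _j ∈ s, M := sum_le_sum h
    _ = M * s.card := by rw [sum_const, nsmul_eq_mul, mul_comm]

lemma le_avg {s : Finset (Fin (n+1))} (hs : s.Nonempty) {f : Fin (n+1) → ℝ} {M : ℝ}
    (h : ∀ j ∈ s, M ≤ f j) : M ≤ (∑ j ∈ s, f j) / (s.card : ℝ) := by
  have hc : (0:ℝ) < s.card := by exact_mod_cast card_pos.mpr hs
  rw [le_div_iff₀ hc]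
  calc M * s.card = ∑ _j ∈ s, M := by rw [sum_const, nsmul_eq_mul, mul_comm]
    _ ≤ ∑ j ∈ s, f j := sum_le_sum h

lemma closed_le
    (N : ℕ → Fin (n+1) → Finset (Fin (n+1)))
    (hself : ∀ t i, i ∈ N t i)
    (x : ℕ → Fin (n+1) → ℝ)
    (hx : ∀ t i, x (t + 1) i = (∑ j ∈ N t i, x t j) / ((N t i).card : ℝ))
    (T : Finset (Fin (n+1))) (L : ℝ) (a : ℕ)
    (h0 : ∀ i ∈ T, x a i ≤ L) :
    ∀ t, a ≤ t → (∀ s, a ≤ s → s < t → ∀ i ∈ T, ∀ j ∈ N s i, j ∈ T) →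
      ∀ i ∈ T, x t i ≤ L := by
  intro t
  induction t with
  | zero =>
    intro h _ i hi
    have ha : a = 0 := Nat.le_zero.mp h
    subst ha; exact h0 i hi
  | succ t ih =>
    intro hat hcl i hi
    rcases Nat.eq_or_lt_of_le hat with h | h
    · exact h ▸ h0 i hi
    · have hat' : a ≤ t := Nat.lt_succ_iff.mp h
      have hIH : ∀ i ∈ T, x t i ≤ L := fun i' hi' =>
        ih hat' (fun s hs hst => hcl s hs (hst.trans (Nat.lt_succ_self t))) i' hi'
      rw [hx t i]
      apply avg_le ⟨i, hself t i⟩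
      intro j hj
      exact hIH j (hcl t hat' (Nat.lt_succ_self t) i hi j hj)

lemma closed_ge
    (N : ℕ → Fin (n+1) → Finset (Fin (n+1)))
    (hself : ∀ t i, i ∈ N t i)
    (x : ℕ → Fin (n+1) → ℝ)
    (hx : ∀ t i, x (t + 1) i = (∑ j ∈ N t i, x t j) / ((N t i).card : ℝ))
    (T : Finset (Fin (n+1))) (L : ℝ) (a : ℕ)
    (h0 : ∀ i ∈ T, L ≤ x a i) :
    ∀ t, a ≤ t → (∀ s, a ≤ s → s < t → ∀ i ∈ T, ∀ j ∈ N s i, j ∈ T) →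
      ∀ i ∈ T, L ≤ x t i := by
  have key := closed_le N hself (fun t i => -(x t i))
    (by
      intro t i
      show -(x (t+1) i) = _
      rw [hx t i, Finset.sum_neg_distrib, neg_div])
    T (-L) a (fun i hi => neg_le_neg (h0 i hi))
  intro t hat hcl i hi
  have h := key t hat hcl i hi
  simp only [neg_le_neg_iff] at h
  linarith [h]



lemma swap_sum (N : ℕ → Fin (n+1) → Finset (Fin (n+1)))
    (hsym : ∀ t i j, j ∈ N t i ↔ i ∈ N t j) (t : ℕ) (F : Fin (n+1) → Fin (n+1) → ℝ) :
    ∑ i, ∑ j ∈ N t i, F i j = ∑ j, ∑ i ∈ N t j, F i j :=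
  Finset.sum_comm' (fun i j => by
    simp only [Finset.mem_univ, true_and, and_true]
    exact hsym t i j)

lemma stationary
    (N : ℕ → Fin (n+1) → Finset (Fin (n+1))) (D : Fin (n+1) → ℕ)
    (hsym : ∀ t i j, j ∈ N t i ↔ i ∈ N t j)
    (hself : ∀ t i, i ∈ N t i)
    (hD : ∀ t i, (N t i).card = D i ∨ (N t i).card = 1)
    (hD1 : ∀ i, 1 ≤ D i) (t : ℕ) (j : Fin (n+1)) :
    ∑ i ∈ N t j, (D i : ℝ) / ((N t i).card : ℝ) = (D j : ℝ) := by
  by_cases h1 : (N t j).card = 1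
  · have hNj : N t j = {j} := by
      obtain ⟨a, ha⟩ := Finset.card_eq_one.mp h1
      have hj : j ∈ N t j := hself t j
      rw [ha] at hj ⊢
      rw [Finset.mem_singleton] at hj
      rw [hj]
    rw [hNj, Finset.sum_singleton, hNj, Finset.card_singleton]
    norm_num
  · have hcard : (N t j).card = D j := (hD t j).resolve_right h1
    have hterm : ∀ i ∈ N t j, (D i : ℝ) / ((N t i).card : ℝ) = 1 := by
      intro i hi
      have hji : j ∈ N t i := (hsym t i j).mpr hi
      rcases hD t i with h | h
      · rw [h]
        have h0 : (0:ℕ) < D i := hD1 i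
        have : ((D i : ℝ)) ≠ 0 := by exact_mod_cast h0.ne'
        exact div_self this
      · exfalso
        obtain ⟨a, ha⟩ := Finset.card_eq_one.mp h
        have hii : i ∈ N t i := hself t i
        rw [ha, Finset.mem_singleton] at hii hji
        have hij : i = j := by rw [hii, hji]
        exact h1 (hij ▸ h)
    rw [Finset.sum_congr rfl hterm, Finset.sum_const, hcard]
    simp


lemma sum_Ico_succ_sub (G : ℕ → ℝ) (a b : ℕ) (hab : a ≤ b) :
    ∑ l ∈ Finset.Ico a b, (G (l+1) - G l) = G b - G a := by
  rw [Finset.sum_Ico_eq_sum_range]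
  have := Finset.sum_range_sub (fun i => G (a + i)) (b - a)
  simpa [Nat.add_sub_cancel' hab, add_assoc] using this

lemma sum_sq_le_sq (s : Finset ℕ) (g : ℕ → ℝ) (hg : ∀ l, 0 ≤ g l) :
    ∑ l ∈ s, (g l)^2 ≤ (∑ l ∈ s, g l)^2 := by
  calc ∑ l ∈ s, (g l)^2 = ∑ l ∈ s, g l * g l := by simp [sq]
    _ ≤ ∑ l ∈ s, (∑ m ∈ s, g m) * g l := by
        apply sum_le_sum
        intro l hl
        exact mul_le_mul_of_nonneg_right (Finset.single_le_sum (fun m _ => hg m) hl) (hg l)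
    _ = (∑ l ∈ s, g l)^2 := by rw [← Finset.mul_sum]; ring

lemma step_eq
    (N : ℕ → Fin (n+1) → Finset (Fin (n+1))) (D : Fin (n+1) → ℕ)
    (hsym : ∀ t i j, j ∈ N t i ↔ i ∈ N t j)
    (hself : ∀ t i, i ∈ N t i)
    (hD : ∀ t i, (N t i).card = D i ∨ (N t i).card = 1)
    (hD1 : ∀ i, 1 ≤ D i)
    (x : ℕ → Fin (n+1) → ℝ)
    (hx : ∀ t i, x (t + 1) i = (∑ j ∈ N t i, x t j) / ((N t i).card : ℝ))
    (t : ℕ) (c : ℝ) :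
    ∑ i, (D i : ℝ) * (x (t+1) i - c)^2
      = ∑ i, (D i : ℝ) * (x t i - c)^2
        - ∑ i, ((D i : ℝ) / ((N t i).card : ℝ)) * ∑ j ∈ N t i, (x t j - x (t+1) i)^2 := by
  have hcard : ∀ i : Fin (n+1), ((N t i).card : ℝ) ≠ 0 := by
    intro i
    have : 0 < (N t i).card := card_pos.mpr ⟨i, hself t i⟩
    exact_mod_cast this.ne'
  have hkey : ∀ i, ∑ j ∈ N t i, (x t j - c) = ((N t i).card : ℝ) * (x (t+1) i - c) := by
    intro i
    rw [Finset.sum_sub_distrib, Finset.sum_const, hx t i, nsmul_eq_mul, mul_sub,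
      mul_div_cancel₀ _ (hcard i)]
  have hinner : ∀ i, ∑ j ∈ N t i, (x t j - x (t+1) i)^2
      = (∑ j ∈ N t i, (x t j - c)^2) - ((N t i).card : ℝ) * (x (t+1) i - c)^2 := by
    intro i
    have expand : ∀ j : Fin (n+1), (x t j - x (t+1) i)^2
        = (x t j - c)^2 - 2*(x (t+1) i - c)*(x t j - c) + ((x (t+1) i - c)^2) := by
      intro j; ring
    rw [Finset.sum_congr rfl (fun j _ => expand j), Finset.sum_add_distrib,
      Finset.sum_sub_distrib, ← Finset.mul_sum, hkey i, Finset.sum_const, nsmul_eq_mul]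
    ring
  have hsplit : ∑ i, ((D i:ℝ)/((N t i).card:ℝ)) * ∑ j ∈ N t i, (x t j - x (t+1) i)^2
      = (∑ i, ((D i:ℝ)/((N t i).card:ℝ)) * ∑ j ∈ N t i, (x t j - c)^2)
        - ∑ i, (D i:ℝ) * (x (t+1) i - c)^2 := by
    rw [← Finset.sum_sub_distrib]
    apply Finset.sum_congr rfl
    intro i _
    have hc := hcard i
    rw [hinner i, mul_sub]
    congr 1
    field_simp
  have hswap : ∑ i, ((D i:ℝ)/((N t i).card:ℝ)) * ∑ j ∈ N t i, (x t j - c)^2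
      = ∑ j, (D j:ℝ) * (x t j - c)^2 := by
    calc ∑ i, ((D i:ℝ)/((N t i).card:ℝ)) * ∑ j ∈ N t i, (x t j - c)^2
        = ∑ i, ∑ j ∈ N t i, ((D i:ℝ)/((N t i).card:ℝ)) * (x t j - c)^2 := by
          apply Finset.sum_congr rfl; intro i _; rw [Finset.mul_sum]
      _ = ∑ j, ∑ i ∈ N t j, ((D i:ℝ)/((N t i).card:ℝ)) * (x t j - c)^2 :=
          swap_sum N hsym t _
      _ = ∑ j, (∑ i ∈ N t j, (D i:ℝ)/((N t i).card:ℝ)) * (x t j - c)^2 := by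
          apply Finset.sum_congr rfl; intro j _; rw [Finset.sum_mul]
      _ = ∑ j, (D j:ℝ) * (x t j - c)^2 := by
          apply Finset.sum_congr rfl; intro j _
          rw [Consensus17.stationary N D hsym hself hD hD1 t j]
  rw [hsplit, hswap]
  ring


lemma step_le
    (N : ℕ → Fin (n+1) → Finset (Fin (n+1))) (D : Fin (n+1) → ℕ)
    (hsym : ∀ t i j, j ∈ N t i ↔ i ∈ N t j)
    (hself : ∀ t i, i ∈ N t i)
    (hD : ∀ t i, (N t i).card = D i ∨ (N t i).card = 1)
    (hD1 : ∀ i, 1 ≤ D i)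
    (x : ℕ → Fin (n+1) → ℝ)
    (hx : ∀ t i, x (t + 1) i = (∑ j ∈ N t i, x t j) / ((N t i).card : ℝ))
    (t : ℕ) (c : ℝ) :
    ∑ i, (D i : ℝ) * (x (t+1) i - c)^2
      ≤ ∑ i, (D i : ℝ) * (x t i - c)^2
        - ∑ i, ∑ j ∈ N t i, (x t j - x (t+1) i)^2 := by
  rw [step_eq N D hsym hself hD hD1 x hx t c]
  have h : ∑ i, ∑ j ∈ N t i, (x t j - x (t+1) i)^2
      ≤ ∑ i, ((D i : ℝ) / ((N t i).card : ℝ)) * ∑ j ∈ N t i, (x t j - x (t+1) i)^2 := by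
    apply Finset.sum_le_sum
    intro i _
    have hnn : 0 ≤ ∑ j ∈ N t i, (x t j - x (t+1) i)^2 :=
      Finset.sum_nonneg fun j _ => sq_nonneg _
    have hone : (1:ℝ) ≤ (D i : ℝ) / ((N t i).card : ℝ) := by
      rcases hD t i with h | h
      · rw [h]
        have h0 : (0:ℕ) < D i := hD1 i
        rw [div_self (by exact_mod_cast h0.ne' : ((D i : ℝ)) ≠ 0)]
      · rw [h]
        simp only [Nat.cast_one, div_one]
        exact_mod_cast hD1 i
    calc ∑ j ∈ N t i, (x t j - x (t+1) i)^2
        = 1 * ∑ j ∈ N t i, (x t j - x (t+1) i)^2 := (one_mul _).symm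
      _ ≤ _ := mul_le_mul_of_nonneg_right hone hnn
  linarith

lemma sum_invariant
    (N : ℕ → Fin (n+1) → Finset (Fin (n+1))) (D : Fin (n+1) → ℕ)
    (hsym : ∀ t i j, j ∈ N t i ↔ i ∈ N t j)
    (hself : ∀ t i, i ∈ N t i)
    (hD : ∀ t i, (N t i).card = D i ∨ (N t i).card = 1)
    (hD1 : ∀ i, 1 ≤ D i)
    (x : ℕ → Fin (n+1) → ℝ)
    (hx : ∀ t i, x (t + 1) i = (∑ j ∈ N t i, x t j) / ((N t i).card : ℝ))
    (t : ℕ) :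
    ∑ i, (D i : ℝ) * x (t+1) i = ∑ i, (D i : ℝ) * x t i := by
  have hcard : ∀ i : Fin (n+1), ((N t i).card : ℝ) ≠ 0 := by
    intro i
    have : 0 < (N t i).card := card_pos.mpr ⟨i, hself t i⟩
    exact_mod_cast this.ne'
  calc ∑ i, (D i:ℝ) * x (t+1) i
      = ∑ i, ∑ j ∈ N t i, ((D i:ℝ)/((N t i).card:ℝ)) * x t j := by
        apply Finset.sum_congr rfl
        intro i _
        rw [hx t i, ← Finset.mul_sum]
        field_simp
    _ = ∑ j, ∑ i ∈ N t j, ((D i:ℝ)/((N t i).card:ℝ)) * x t j :=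
        Finset.sum_comm' (fun i j => by
          simp only [Finset.mem_univ, true_and, and_true]
          exact hsym t i j)
    _ = ∑ j, (D j:ℝ) * x t j := by
        apply Finset.sum_congr rfl
        intro j _
        rw [← Finset.sum_mul, stationary N D hsym hself hD hD1 t j]

lemma window
    (B : ℕ) (hB : 0 < B)
    (N : ℕ → Fin (n+1) → Finset (Fin (n+1))) (D : Fin (n+1) → ℕ)
    (hsym : ∀ t i j, j ∈ N t i ↔ i ∈ N t j)
    (hself : ∀ t i, i ∈ N t i)
    (hD : ∀ t i, (N t i).card = D i ∨ (N t i).card = 1)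
    (hD1 : ∀ i, 1 ≤ D i)
    (hBconn : ∀ m : ℕ, ∀ i j, Relation.ReflTransGen
      (fun a b => ∃ t, m * B ≤ t ∧ t < (m + 1) * B ∧ b ∈ N t a) i j)
    (x : ℕ → Fin (n+1) → ℝ)
    (hx : ∀ t i, x (t + 1) i = (∑ j ∈ N t i, x t j) / ((N t i).card : ℝ))
    (c : ℝ) (m : ℕ) :
    ∑ i, (D i : ℝ) * (x (m*B + B) i - c)^2
      ≤ ∑ i, (D i : ℝ) * (x (m*B) i - c)^2
        - (Finset.univ.sup' Finset.univ_nonempty (x (m*B)) -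
           Finset.univ.inf' Finset.univ_nonempty (x (m*B)))^2 / (2*(n+1)) := by
  classical
  set τ := m * B with hτ
  set V : ℕ → ℝ := fun t => ∑ i, (D i:ℝ) * (x t i - c)^2 with hV
  set E : ℕ → ℝ := fun t => ∑ i, ∑ j ∈ N t i, (x t j - x (t+1) i)^2 with hE
  have hEnn : ∀ t, 0 ≤ E t :=
    fun t => sum_nonneg fun i _ => sum_nonneg fun j _ => sq_nonneg _
  have hstep : ∀ t, V (t+1) ≤ V t - E t :=
    fun t => step_le N D hsym hself hD hD1 x hx t c
  have htel : V τ - V (τ + B) = ∑ t ∈ Finset.Ico τ (τ + B), (V t - V (t+1)) := by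
    have := sum_Ico_succ_sub (fun t => -V t) τ (τ + B) (Nat.le_add_right _ _)
    simp only [neg_sub_neg] at this
    linarith [this]
  have hVE : ∑ t ∈ Finset.Ico τ (τ+B), E t ≤ V τ - V (τ+B) := by
    rw [htel]
    exact sum_le_sum fun t _ => by linarith [hstep t]
  -- sorting
  set f : Fin (n+1) → ℝ := x τ with hf
  set σ : Equiv.Perm (Fin (n+1)) := Tuple.sort f with hσ
  have hmono : Monotone (f ∘ σ) := Tuple.monotone_sort f
  set G : ℕ → ℝ := fun l => f (σ ⟨min l n, by omega⟩) with hG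
  set g : ℕ → ℝ := fun l => G (l+1) - G l with hg
  have hGmono : ∀ a b : ℕ, a ≤ b → G a ≤ G b := by
    intro a b hab
    exact hmono (by simp only [Fin.mk_le_mk]; omega)
  have hgnn : ∀ l, 0 ≤ g l := fun l => sub_nonneg.mpr (hGmono l (l+1) (by omega))
  -- cut sets
  set Bl : ℕ → Finset (Fin (n+1)) :=
    fun l => Finset.univ.filter (fun i => ((σ.symm i : Fin (n+1)) : ℕ) ≤ l) with hBl
  set Cross : ℕ → ℕ → Prop :=
    fun l s => ∃ i ∈ Bl l, ∃ j, j ∉ Bl l ∧ j ∈ N s i with hCross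
  have hBlmem : ∀ l (i : Fin (n+1)), i ∈ Bl l ↔ ((σ.symm i : Fin (n+1)) : ℕ) ≤ l := by
    intro l i; simp [hBl]
  have hcross_ex : ∀ l, l < n → ∃ s, τ ≤ s ∧ s < τ + B ∧ Cross l s := by
    intro l hl
    have hstart : σ ⟨l, by omega⟩ ∈ Bl l := by
      rw [hBlmem, Equiv.symm_apply_apply]
    have hend : σ ⟨l+1, by omega⟩ ∉ Bl l := by
      rw [hBlmem, Equiv.symm_apply_apply]
      simp
    have key : ∀ a b : Fin (n+1), Relation.ReflTransGen
        (fun a b => ∃ t, m * B ≤ t ∧ t < (m + 1) * B ∧ b ∈ N t a) a b →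
        a ∈ Bl l → b ∉ Bl l → ∃ s, τ ≤ s ∧ s < τ + B ∧ Cross l s := by
      intro a b hab
      induction hab with
      | refl => intro h1 h2; exact absurd h1 h2
      | @tail p q hap hpq ih =>
        intro ha hq
        by_cases hp : p ∈ Bl l
        · obtain ⟨t, ht1, ht2, ht3⟩ := hpq
          refine ⟨t, ht1, ?_, p, hp, q, hq, ht3⟩
          have : (m+1)*B = m*B + B := by ring
          omega
        · exact ih ha hp
    exact key _ _ (hBconn m _ _) hstart hend
  -- first crossing times
  have hspec : ∀ l : ℕ, ∃ s, l < n → (τ ≤ s ∧ s < τ + B ∧ Cross l s) := by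
    intro l
    by_cases hl : l < n
    · obtain ⟨s, hs⟩ := hcross_ex l hl; exact ⟨s, fun _ => hs⟩
    · exact ⟨0, fun h => absurd h hl⟩
  set tl : ℕ → ℕ := fun l => Nat.find (hspec l) with htl
  have htl_spec : ∀ l, l < n → τ ≤ tl l ∧ tl l < τ + B ∧ Cross l (tl l) :=
    fun l hl => Nat.find_spec (hspec l) hl
  have htl_min : ∀ l, l < n → ∀ s, τ ≤ s → s < tl l → ¬ Cross l s := by
    intro l hl s hs1 hs2 hc
    exact Nat.find_min (hspec l) hs2
      (fun _ => ⟨hs1, by have := (htl_spec l hl).2.1; omega, hc⟩)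
  -- witnesses
  have hwit : ∀ l : ℕ, ∃ p : Fin (n+1) × Fin (n+1),
      l < n → (p.1 ∈ Bl l ∧ p.2 ∉ Bl l ∧ p.2 ∈ N (tl l) p.1) := by
    intro l
    by_cases hl : l < n
    · obtain ⟨i, hi, j, hj1, hj2⟩ := (htl_spec l hl).2.2
      exact ⟨(i, j), fun _ => ⟨hi, hj1, hj2⟩⟩
    · exact ⟨(0, 0), fun h => absurd h hl⟩
  choose w hwspec using hwit
  -- invariance bounds
  have hupper : ∀ l, l < n → ∀ s, τ ≤ s → s ≤ tl l → ∀ i ∈ Bl l, x s i ≤ G l := by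
    intro l hl s hs1 hs2
    apply closed_le N hself x hx (Bl l) (G l) τ _ s hs1 _
    · intro i hi
      rw [hBlmem] at hi
      have : x τ i = (f ∘ σ) (σ.symm i) := by
        simp only [Function.comp_apply, Equiv.apply_symm_apply, hf]
      rw [this]
      have : (σ.symm i) ≤ (⟨min l n, by omega⟩ : Fin (n+1)) := by
        simp only [Fin.le_def]
        omega
      exact hmono this
    · intro s' hs'1 hs'2 i hi j hj
      by_contra hjn
      exact htl_min l hl s' hs'1 (by omega) ⟨i, hi, j, hjn, hj⟩
  have hlower : ∀ l, l < n → ∀ s, τ ≤ s → s ≤ tl l → ∀ i, i ∉ Bl l → G (l+1) ≤ x s i := by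
    intro l hl s hs1 hs2 i hi
    have hTmem : ∀ j : Fin (n+1),
        j ∈ Finset.univ.filter (fun i => l < ((σ.symm i : Fin (n+1)) : ℕ)) ↔ j ∉ Bl l := by
      intro j
      rw [hBlmem]
      simp only [Finset.mem_filter, Finset.mem_univ, true_and]
      omega
    apply closed_ge N hself x hx
      (Finset.univ.filter (fun i => l < ((σ.symm i : Fin (n+1)) : ℕ))) (G (l+1)) τ
      ?_ s hs1 ?_ i ((hTmem i).mpr hi)
    · intro j hj
      simp only [Finset.mem_filter, Finset.mem_univ, true_and] at hj
      have h1 : x τ j = (f ∘ σ) (σ.symm j) := by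
        simp only [Function.comp_apply, Equiv.apply_symm_apply, hf]
      rw [h1]
      have h2 : (⟨min (l+1) n, by omega⟩ : Fin (n+1)) ≤ σ.symm j := by
        simp only [Fin.le_def]
        omega
      exact hmono h2
    · intro s' hs'1 hs'2 j hj j' hj'
      rw [hTmem] at hj ⊢
      by_contra hj'n
      exact htl_min l hl s' hs'1 (by omega) ⟨j', hj'n, j, hj, (hsym s' j j').mp hj'⟩
  -- the charging argument
  set φ : ℕ → ℕ × Fin (n+1) := fun l => (tl l, (w l).2) with hφ
  have hmaps : ∀ l ∈ Finset.range n, φ l ∈ (Finset.Ico τ (τ+B)) ×ˢ (Finset.univ : Finset (Fin (n+1))) := by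
    intro l hl
    have := htl_spec l (Finset.mem_range.mp hl)
    simp only [hφ, Finset.mem_product, Finset.mem_Ico, Finset.mem_univ, and_true]
    exact ⟨this.1, this.2.1⟩
  have hfiber := Finset.sum_fiberwise_of_maps_to hmaps (fun l => (g l)^2)
  have hfib_bound : ∀ p ∈ (Finset.Ico τ (τ+B)) ×ˢ (Finset.univ : Finset (Fin (n+1))),
      ∑ l ∈ (Finset.range n).filter (fun l => φ l = p), (g l)^2
        ≤ 2 * ∑ j ∈ N p.1 p.2, (x p.1 j - x (p.1+1) p.2)^2 := by
    rintro ⟨t, a⟩ hp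
    set F := (Finset.range n).filter (fun l => φ l = (t, a)) with hF
    rcases Finset.eq_empty_or_nonempty F with hFe | hFe
    · rw [hFe]
      simp only [Finset.sum_empty]
      positivity
    · set l₀ := F.min' hFe with hl₀
      set l₁ := F.max' hFe with hl₁
      have hmem : ∀ l ∈ F, l < n ∧ tl l = t ∧ (w l).2 = a := by
        intro l hl
        simp only [hF, Finset.mem_filter, Finset.mem_range, hφ, Prod.mk.injEq] at hl
        exact ⟨hl.1, hl.2.1, hl.2.2⟩
      obtain ⟨hl₀n, htl₀, hu₀⟩ := hmem l₀ (F.min'_mem hFe)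
      obtain ⟨hl₁n, htl₁, hu₁⟩ := hmem l₁ (F.max'_mem hFe)
      have hl01 : l₀ ≤ l₁ := F.min'_le _ (F.max'_mem hFe)
      have hw₀ := hwspec l₀ hl₀n
      have hw₁ := hwspec l₁ hl₁n
      have htw : τ ≤ t ∧ t < τ + B := by
        have := htl_spec l₀ hl₀n
        rw [htl₀] at this
        exact ⟨this.1, this.2.1⟩
      have hb1 : x t ((w l₀).1) ≤ G l₀ :=
        hupper l₀ hl₀n t htw.1 (le_of_eq htl₀.symm) ((w l₀).1) hw₀.1
      have hb2 : G (l₁+1) ≤ x t a := by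
        apply hlower l₁ hl₁n t htw.1 (le_of_eq htl₁.symm) a
        rw [← hu₁]
        exact hw₁.2.1
      have hvNa : (w l₀).1 ∈ N t a := by
        have h3 := hw₀.2.2
        rw [htl₀, hu₀] at h3
        exact (hsym t a ((w l₀).1)).mpr h3
      have hva : (w l₀).1 ≠ a := by
        intro h
        have := hw₀.2.1
        rw [hu₀] at this
        exact this (h ▸ hw₀.1)
      have hsub : F ⊆ Finset.Ico l₀ (l₁+1) := fun l hl =>
        Finset.mem_Ico.mpr ⟨F.min'_le l hl, Nat.lt_succ_of_le (F.le_max' l hl)⟩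
      have hsum1 : ∑ l ∈ F, g l ≤ ∑ l ∈ Finset.Ico l₀ (l₁+1), g l :=
        Finset.sum_le_sum_of_subset_of_nonneg hsub (fun l _ _ => hgnn l)
      have hsum2 : ∑ l ∈ Finset.Ico l₀ (l₁+1), g l = G (l₁+1) - G l₀ :=
        sum_Ico_succ_sub G l₀ (l₁+1) (by omega)
      have hchain : ∑ l ∈ F, g l ≤ x t a - x t ((w l₀).1) := by
        rw [hsum2] at hsum1
        linarith
      have hFnn : 0 ≤ ∑ l ∈ F, g l := Finset.sum_nonneg fun l _ => hgnn l
      have hsq : ∑ l ∈ F, (g l)^2 ≤ (x t a - x t ((w l₀).1))^2 := by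
        calc ∑ l ∈ F, (g l)^2 ≤ (∑ l ∈ F, g l)^2 := sum_sq_le_sq F g hgnn
          _ ≤ (x t a - x t ((w l₀).1))^2 := by
              apply pow_le_pow_left₀ hFnn hchain
      have hpair : (x t ((w l₀).1) - x (t+1) a)^2 + (x t a - x (t+1) a)^2
          ≤ ∑ j ∈ N t a, (x t j - x (t+1) a)^2 := by
        have hsubp : ({(w l₀).1, a} : Finset (Fin (n+1))) ⊆ N t a := by
          intro z hz
          rcases Finset.mem_insert.mp hz with h | h
          · exact h ▸ hvNa
          · rw [Finset.mem_singleton] at h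
            exact h ▸ hself t a
        calc (x t ((w l₀).1) - x (t+1) a)^2 + (x t a - x (t+1) a)^2
            = ∑ j ∈ ({(w l₀).1, a} : Finset (Fin (n+1))), (x t j - x (t+1) a)^2 := by
              rw [Finset.sum_pair hva]
          _ ≤ _ := Finset.sum_le_sum_of_subset_of_nonneg hsubp (fun _ _ _ => sq_nonneg _)
      nlinarith [hsq, hpair, sq_nonneg (x t ((w l₀).1) + x t a - 2 * x (t+1) a)]
  have hcharge : ∑ l ∈ Finset.range n, (g l)^2 ≤ 2 * ∑ t ∈ Finset.Ico τ (τ+B), E t := by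
    rw [← hfiber]
    calc ∑ p ∈ (Finset.Ico τ (τ+B)) ×ˢ (Finset.univ : Finset (Fin (n+1))),
          ∑ l ∈ (Finset.range n).filter (fun l => φ l = p), (g l)^2
        ≤ ∑ p ∈ (Finset.Ico τ (τ+B)) ×ˢ (Finset.univ : Finset (Fin (n+1))),
            2 * ∑ j ∈ N p.1 p.2, (x p.1 j - x (p.1+1) p.2)^2 :=
          Finset.sum_le_sum hfib_bound
      _ = 2 * ∑ t ∈ Finset.Ico τ (τ+B), E t := by
          rw [Finset.sum_product, Finset.mul_sum]
          apply Finset.sum_congr rfl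
          intro t _
          rw [hE, Finset.mul_sum]
  -- sup and inf
  have hsup : Finset.univ.sup' Finset.univ_nonempty (x τ) = G n := by
    apply le_antisymm
    · apply Finset.sup'_le
      intro i _
      have h1 : x τ i = (f ∘ σ) (σ.symm i) := by
        simp only [Function.comp_apply, Equiv.apply_symm_apply, hf]
      rw [h1]
      apply hmono
      simp only [Fin.le_def]
      have := (σ.symm i).isLt
      omega
    · have : G n = x τ (σ ⟨min n n, by omega⟩) := rfl
      rw [this]
      exact Finset.le_sup' (x τ) (Finset.mem_univ _)
  have hinf : Finset.univ.inf' Finset.univ_nonempty (x τ) = G 0 := by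
    apply le_antisymm
    · have : G 0 = x τ (σ ⟨min 0 n, by omega⟩) := rfl
      rw [this]
      exact Finset.inf'_le (x τ) (Finset.mem_univ _)
    · apply Finset.le_inf'
      intro i _
      have h1 : x τ i = (f ∘ σ) (σ.symm i) := by
        simp only [Function.comp_apply, Equiv.apply_symm_apply, hf]
      rw [h1]
      apply hmono
      simp only [Fin.le_def]
      omega
  have htelS : ∑ l ∈ Finset.range n, g l = G n - G 0 := by
    have := sum_Ico_succ_sub G 0 n (Nat.zero_le n)
    rw [Finset.range_eq_Ico]
    exact this
  have hCS : (G n - G 0)^2 ≤ (n:ℝ) * ∑ l ∈ Finset.range n, (g l)^2 := by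
    rw [← htelS]
    have := sq_sum_le_card_mul_sum_sq (s := Finset.range n) (f := g)
    simpa using this
  -- conclude
  have hEsum : 0 ≤ ∑ t ∈ Finset.Ico τ (τ+B), E t :=
    Finset.sum_nonneg fun t _ => hEnn t
  have hfin : (G n - G 0)^2 / (2*(n+1)) ≤ ∑ t ∈ Finset.Ico τ (τ+B), E t := by
    rw [div_le_iff₀ (by positivity)]
    have h1 : (G n - G 0)^2 ≤ (n:ℝ) * (2 * ∑ t ∈ Finset.Ico τ (τ+B), E t) :=
      le_trans hCS (by
        apply mul_le_mul_of_nonneg_left hcharge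
        positivity)
    nlinarith [hEsum]
  have hVfin : V (τ + B) ≤ V τ - (G n - G 0)^2 / (2*(n+1)) := by
    have := hVE
    linarith [hfin]
  rw [hsup, hinf]
  exact hVfin

end Consensus17

open Consensus17
set_option maxHeartbeats 1000000

/-- Main theorem: For a `B`-connected sequence of undirected graphs
with self-loops on `n+1` nodes in which each node's degree at every time is either
`d_i` or `1`, if `k ≥ B + 4(n+1)³ B ln(2(n+1)/ε)` then the equal-neighbor iteration
achieves `ε`-consensus: `S(x(k)) ≤ ε S(x(0))`. -/
theorem main_consensus_time
    (n B k : ℕ) (hB : 0 < B)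
    (N : ℕ → Fin (n + 1) → Finset (Fin (n + 1))) (d : Fin (n + 1) → ℕ)
    (hsym : ∀ t i j, j ∈ N t i ↔ i ∈ N t j)
    (hself : ∀ t i, i ∈ N t i)
    (hdeg : ∀ t i, (N t i).card = d i ∨ (N t i).card = 1)
    (hBconn : ∀ m : ℕ, ∀ i j, Relation.ReflTransGen
      (fun a b => ∃ t, m * B ≤ t ∧ t < (m + 1) * B ∧ b ∈ N t a) i j)
    (ε : ℝ) (hε : 0 < ε)
    (hk : (B : ℝ) + 4 * (n + 1 : ℝ) ^ 3 * B * Real.log (2 * (n + 1) / ε) ≤ (k : ℝ))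
    (x : ℕ → Fin (n + 1) → ℝ)
    (hx : ∀ t i, x (t + 1) i = (∑ j ∈ N t i, x t j) / ((N t i).card : ℝ)) :
    Finset.univ.sup' Finset.univ_nonempty (x k) -
        Finset.univ.inf' Finset.univ_nonempty (x k) ≤
      ε * (Finset.univ.sup' Finset.univ_nonempty (x 0) -
        Finset.univ.inf' Finset.univ_nonempty (x 0)) := by
  classical
  -- the degree function (made canonical)
  set D : Fin (n+1) → ℕ := fun i =>
    if h : ∃ t, (N t i).card ≠ 1 then (N h.choose i).card else 1 with hDdef
  have hD : ∀ t i, (N t i).card = D i ∨ (N t i).card = 1 := by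
    intro t i
    by_cases h1 : (N t i).card = 1
    · exact Or.inr h1
    · left
      have hex : ∃ t', (N t' i).card ≠ 1 := ⟨t, h1⟩
      simp only [hDdef, dif_pos hex]
      have h2 := hex.choose_spec
      rcases hdeg t i with h | h
      · rcases hdeg hex.choose i with h' | h'
        · rw [h, h']
        · exact absurd h' h2
      · exact absurd h h1
  have hD1 : ∀ i, 1 ≤ D i := by
    intro i
    simp only [hDdef]
    split
    · next h =>
        have : i ∈ N h.choose i := hself _ i
        exact Finset.card_pos.mpr ⟨i, this⟩
    · exact le_refl 1
  have hDn : ∀ i, D i ≤ n + 1 := by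
    intro i
    simp only [hDdef]
    split
    · next h =>
        calc (N h.choose i).card ≤ (Finset.univ : Finset (Fin (n+1))).card :=
              Finset.card_le_card (Finset.subset_univ _)
          _ = n + 1 := by simp
    · omega
  -- basic notation
  set S : ℕ → ℝ := fun t => Finset.univ.sup' Finset.univ_nonempty (x t) -
      Finset.univ.inf' Finset.univ_nonempty (x t) with hS
  have hSnn : ∀ t, 0 ≤ S t := by
    intro t
    have h1 : Finset.univ.inf' Finset.univ_nonempty (x t) ≤ x t 0 :=
      Finset.inf'_le (x t) (Finset.mem_univ 0)
    have h2 : x t 0 ≤ Finset.univ.sup' Finset.univ_nonempty (x t) :=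
      Finset.le_sup' (x t) (Finset.mem_univ 0)
    simp only [hS]
    linarith
  set W : ℝ := ∑ i, (D i : ℝ) with hW
  have hWpos : 0 < W := by
    apply Finset.sum_pos _ Finset.univ_nonempty
    intro i _
    exact_mod_cast hD1 i
  have hWle : W ≤ ((n:ℝ)+1)^2 := by
    calc W ≤ ∑ _i : Fin (n+1), ((n:ℝ)+1) := by
          apply Finset.sum_le_sum
          intro i _
          exact_mod_cast hDn i
      _ = ((n:ℝ)+1)^2 := by
          rw [Finset.sum_const, nsmul_eq_mul]
          simp
          ring
  set μ : ℝ := (∑ i, (D i:ℝ) * x 0 i) / W with hμ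
  have hsuminv : ∀ t, ∑ i, (D i:ℝ) * x t i = μ * W := by
    intro t
    induction t with
    | zero => rw [hμ, div_mul_cancel₀ _ hWpos.ne']
    | succ t ih => rw [sum_invariant N D hsym hself hD hD1 x hx t]; exact ih
  set V : ℕ → ℝ := fun t => ∑ i, (D i:ℝ) * (x t i - μ)^2 with hV
  have hVnn : ∀ t, 0 ≤ V t :=
    fun t => Finset.sum_nonneg fun i _ => mul_nonneg (Nat.cast_nonneg _) (sq_nonneg _)
  have hVstep : ∀ t, V (t+1) ≤ V t := by
    intro t
    have h1 := step_le N D hsym hself hD hD1 x hx t μ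
    have h2 : 0 ≤ ∑ i, ∑ j ∈ N t i, (x t j - x (t+1) i)^2 :=
      Finset.sum_nonneg fun i _ => Finset.sum_nonneg fun j _ => sq_nonneg _
    simp only [hV]
    linarith
  have hVmono : ∀ s t : ℕ, s ≤ t → V t ≤ V s := by
    intro s t h
    induction t with
    | zero => have : s = 0 := Nat.le_zero.mp h; rw [this]
    | succ t ih =>
      rcases Nat.eq_or_lt_of_le h with h' | h'
      · rw [h']
      · exact le_trans (hVstep t) (ih (Nat.lt_succ_iff.mp h'))
  -- μ is between inf and sup at every time
  have hμmem : ∀ t, Finset.univ.inf' Finset.univ_nonempty (x t) ≤ μ ∧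
      μ ≤ Finset.univ.sup' Finset.univ_nonempty (x t) := by
    intro t
    constructor
    · have h1 : (Finset.univ.inf' Finset.univ_nonempty (x t)) * W ≤ μ * W := by
        calc (Finset.univ.inf' Finset.univ_nonempty (x t)) * W
            = ∑ i, (D i:ℝ) * (Finset.univ.inf' Finset.univ_nonempty (x t)) := by
              rw [hW, Finset.mul_sum]
              apply Finset.sum_congr rfl
              intro i _
              ring
          _ ≤ ∑ i, (D i:ℝ) * x t i := Finset.sum_le_sum (fun i _ =>
              mul_le_mul_of_nonneg_left (Finset.inf'_le (x t) (Finset.mem_univ i))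
                (Nat.cast_nonneg _))
          _ = μ * W := hsuminv t
      exact le_of_mul_le_mul_right h1 hWpos
    · have h1 : μ * W ≤ (Finset.univ.sup' Finset.univ_nonempty (x t)) * W := by
        calc μ * W = ∑ i, (D i:ℝ) * x t i := (hsuminv t).symm
          _ ≤ ∑ i, (D i:ℝ) * (Finset.univ.sup' Finset.univ_nonempty (x t)) :=
              Finset.sum_le_sum (fun i _ =>
                mul_le_mul_of_nonneg_left (Finset.le_sup' (x t) (Finset.mem_univ i))
                  (Nat.cast_nonneg _))
          _ = (Finset.univ.sup' Finset.univ_nonempty (x t)) * W := by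
              rw [hW, Finset.mul_sum]
              apply Finset.sum_congr rfl
              intro i _
              ring
      exact le_of_mul_le_mul_right h1 hWpos
  -- V is bounded by S²
  have hVS : ∀ t, V t ≤ ((n:ℝ)+1)^2 * (S t)^2 := by
    intro t
    have hbound : ∀ i, (x t i - μ)^2 ≤ (S t)^2 := by
      intro i
      have h1 := (hμmem t).1
      have h2 := (hμmem t).2
      have h3 : x t i ≤ Finset.univ.sup' Finset.univ_nonempty (x t) :=
        Finset.le_sup' (x t) (Finset.mem_univ i)
      have h4 : Finset.univ.inf' Finset.univ_nonempty (x t) ≤ x t i :=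
        Finset.inf'_le (x t) (Finset.mem_univ i)
      apply sq_le_sq'
      · simp only [hS]; linarith
      · simp only [hS]; linarith
    calc V t ≤ ∑ i, (D i:ℝ) * (S t)^2 := by
          apply Finset.sum_le_sum
          intro i _
          exact mul_le_mul_of_nonneg_left (hbound i) (Nat.cast_nonneg _)
      _ = W * (S t)^2 := by rw [hW, ← Finset.sum_mul]
      _ ≤ ((n:ℝ)+1)^2 * (S t)^2 := mul_le_mul_of_nonneg_right hWle (sq_nonneg _)
  -- contraction per window
  set γ : ℝ := 1/(2*((n:ℝ)+1)^3) with hγ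
  have hγpos : 0 < γ := by rw [hγ]; positivity
  have hγle : γ ≤ 1 := by
    rw [hγ]
    rw [div_le_one (by positivity)]
    nlinarith [sq_nonneg ((n:ℝ)+1), Nat.cast_nonneg (α := ℝ) n]
  have hiter : ∀ m : ℕ, V (m*B) ≤ (1-γ)^m * V 0 := by
    intro m
    induction m with
    | zero => simp
    | succ m ih =>
      have hw := window B hB N D hsym hself hD hD1 hBconn x hx μ m
      have hvs := hVS (m*B)
      have h1 : γ * V (m*B) ≤ (S (m*B))^2 / (2*((n:ℝ)+1)) := by
        have h2 : γ * V (m*B) ≤ γ * (((n:ℝ)+1)^2 * (S (m*B))^2) :=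
          mul_le_mul_of_nonneg_left hvs hγpos.le
        have h3 : γ * (((n:ℝ)+1)^2 * (S (m*B))^2) = (S (m*B))^2 / (2*((n:ℝ)+1)) := by
          rw [hγ]
          field_simp
        exact le_of_le_of_eq h2 h3
      have hstep2 : V ((m+1)*B) ≤ (1-γ) * V (m*B) := by
        have he : (m+1)*B = m*B + B := by ring
        rw [he]
        simp only [hV, hS] at h1 hw ⊢
        linarith
      calc V ((m+1)*B) ≤ (1-γ) * V (m*B) := hstep2
        _ ≤ (1-γ) * ((1-γ)^m * V 0) :=
            mul_le_mul_of_nonneg_left ih (by linarith)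
        _ = (1-γ)^(m+1) * V 0 := by ring
  -- final numerics
  set q : ℕ := k / B with hq
  have hqB : q * B ≤ k := Nat.div_mul_le_self k B
  have hVk : V k ≤ (1-γ)^q * V 0 := le_trans (hVmono (q*B) k hqB) (hiter q)
  have hSk2 : (S k)^2 ≤ 2 * V k := by
    obtain ⟨i0, _, hi0⟩ := Finset.exists_mem_eq_sup' (Finset.univ_nonempty) (x k)
    obtain ⟨j0, _, hj0⟩ := Finset.exists_mem_eq_inf' (Finset.univ_nonempty) (x k)
    by_cases hij : i0 = j0
    · have hSz : S k = 0 := by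
        simp only [hS, hi0, hj0, hij]
        ring
      rw [hSz]
      have := hVnn k
      nlinarith
    · have h2 : (x k i0 - μ)^2 + (x k j0 - μ)^2 ≤ V k := by
        have hsubp : ({i0, j0} : Finset (Fin (n+1))) ⊆ Finset.univ := Finset.subset_univ _
        calc (x k i0 - μ)^2 + (x k j0 - μ)^2
            ≤ (D i0 : ℝ) * (x k i0 - μ)^2 + (D j0 : ℝ) * (x k j0 - μ)^2 := by
              have ha : (1:ℝ) ≤ (D i0 : ℝ) := by exact_mod_cast hD1 i0
              have hb : (1:ℝ) ≤ (D j0 : ℝ) := by exact_mod_cast hD1 j0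
              nlinarith [sq_nonneg (x k i0 - μ), sq_nonneg (x k j0 - μ)]
          _ = ∑ i ∈ ({i0, j0} : Finset (Fin (n+1))), (D i:ℝ) * (x k i - μ)^2 := by
              rw [Finset.sum_pair hij]
          _ ≤ V k := Finset.sum_le_sum_of_subset_of_nonneg hsubp
              (fun i _ _ => mul_nonneg (Nat.cast_nonneg _) (sq_nonneg _))
      simp only [hS, hi0, hj0]
      nlinarith [sq_nonneg (x k i0 + x k j0 - 2*μ)]
  -- q is large
  have hq_lb : 4*((n:ℝ)+1)^3 * Real.log (2*((n:ℝ)+1)/ε) ≤ (q:ℝ) := by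
    have hBpos : (0:ℝ) < B := by exact_mod_cast hB
    apply le_of_mul_le_mul_right _ hBpos
    have h1 : (B:ℝ) * (q:ℝ) + ((k % B : ℕ):ℝ) = (k:ℝ) := by
      exact_mod_cast Nat.div_add_mod k B
    have h2 : ((k % B : ℕ):ℝ) < B := by exact_mod_cast Nat.mod_lt k hB
    have hk' : (B:ℝ) + 4 * ((n:ℝ) + 1) ^ 3 * B * Real.log (2 * ((n:ℝ) + 1) / ε) ≤ (k : ℝ) := by
      exact_mod_cast hk
    linarith [h1, h2, hk']
  have hexp : (1-γ)^q ≤ Real.exp (-(γ * q)) := by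
    calc (1-γ)^q ≤ (Real.exp (-γ))^q := by
          apply pow_le_pow_left₀ (by linarith)
          linarith [Real.add_one_le_exp (-γ)]
      _ = Real.exp (-(γ*q)) := by
          rw [← Real.exp_nat_mul]
          congr 1
          ring
  have hfinal : 2*((n:ℝ)+1)^2 * Real.exp (-(γ * q)) ≤ ε^2 := by
    have hpos : (0:ℝ) < ε^2/(2*((n:ℝ)+1)^2) := by positivity
    have hgoal : Real.exp (-(γ * q)) ≤ ε^2/(2*((n:ℝ)+1)^2) := by
      rw [← Real.le_log_iff_exp_le hpos]
      have hlog : Real.log (ε^2/(2*((n:ℝ)+1)^2))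
          = 2*Real.log ε - Real.log 2 - 2*Real.log ((n:ℝ)+1) := by
        rw [Real.log_div (by positivity) (by positivity), Real.log_mul (by norm_num) (by positivity),
          Real.log_pow, Real.log_pow]
        push_cast
        ring
      have hL : Real.log (2*((n:ℝ)+1)/ε) = Real.log 2 + Real.log ((n:ℝ)+1) - Real.log ε := by
        rw [Real.log_div (by positivity) (by positivity), Real.log_mul (by norm_num) (by positivity)]
      have hγq : 2 * Real.log (2*((n:ℝ)+1)/ε) ≤ γ * q := by
        have h3 : γ * (4*((n:ℝ)+1)^3 * Real.log (2*((n:ℝ)+1)/ε)) ≤ γ * q :=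
          mul_le_mul_of_nonneg_left hq_lb hγpos.le
        have h4 : γ * (4*((n:ℝ)+1)^3 * Real.log (2*((n:ℝ)+1)/ε))
            = 2 * Real.log (2*((n:ℝ)+1)/ε) := by
          rw [hγ]
          field_simp
          ring
        linarith
      have hlog2 : (0:ℝ) ≤ Real.log 2 := Real.log_nonneg (by norm_num)
      rw [hlog]
      rw [hL] at hγq
      linarith
    calc 2*((n:ℝ)+1)^2 * Real.exp (-(γ * q))
        ≤ 2*((n:ℝ)+1)^2 * (ε^2/(2*((n:ℝ)+1)^2)) :=
          mul_le_mul_of_nonneg_left hgoal (by positivity)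
      _ = ε^2 := by field_simp
  -- conclude
  have hchain : (S k)^2 ≤ (ε * S 0)^2 := by
    have h1 : V 0 ≤ ((n:ℝ)+1)^2 * (S 0)^2 := hVS 0
    have h2 : (1-γ)^q * V 0 ≤ Real.exp (-(γ * q)) * (((n:ℝ)+1)^2 * (S 0)^2) := by
      apply mul_le_mul hexp h1 (hVnn 0) (Real.exp_nonneg _)
    have h3 : 2 * (Real.exp (-(γ * q)) * (((n:ℝ)+1)^2 * (S 0)^2)) ≤ ε^2 * (S 0)^2 := by
      have := mul_le_mul_of_nonneg_right hfinal (sq_nonneg (S 0))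
      nlinarith [Real.exp_nonneg (-(γ * q)), sq_nonneg (S 0)]
    calc (S k)^2 ≤ 2 * V k := hSk2
      _ ≤ 2 * ((1-γ)^q * V 0) := by linarith [hVk]
      _ ≤ 2 * (Real.exp (-(γ * q)) * (((n:ℝ)+1)^2 * (S 0)^2)) := by linarith [h2]
      _ ≤ ε^2 * (S 0)^2 := h3
      _ = (ε * S 0)^2 := by ring
  have hfin : S k ≤ ε * S 0 := by
    have h1 : 0 ≤ S k := hSnn k
    have h2 : 0 ≤ ε * S 0 := mul_nonneg hε.le (hSnn 0)
    nlinarith [hchain]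
  simpa only [hS] using hfin
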